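/- Let M be a topological manifold covered by finitely many open sets U_1, …, U_k, and suppose each U_i admits a topological embedding g_i : U_i → ℝ^(q_i) whose image is bounded, such that g_i extends to a continuous map g̃_i : M → ℝ^(q_i) that is constant (equal to a point N_i ∉ g_i(U_i)) on M \ U_i. Then the map g = (g̃_1, …, g̃_k) : M → ℝ^(q_1 + ⋯ + q_k) is a topological embedding. -/
import Mathlib


/-- Gluing step of the Whitney-type embedding: let `M` be a topological manifold covered by
finitely many open sets `U i`, each admitting a topological embedding `g i : U i → ℝ^(q i)`
with bounded image, extending to a continuous map `g̃ i : M → ℝ^(q i)` which is constant,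
with value a point `N i ∉ g i '' (U i)`, on `M \ U i`, and with
`closure (g i '' U i) \ g i '' U i ⊆ {N i}`. Then `x ↦ (g̃ 1 x, …, g̃ k x)` is a
topological embedding of `M` into `ℝ^(q 1 + ⋯ + q k)`. -/
theorem gluing_embedding (d k : ℕ) (q : Fin k → ℕ)
    (M : Type*) [TopologicalSpace M] [T2Space M]
    [ChartedSpace (EuclideanSpace ℝ (Fin d)) M]
    (U : Fin k → Set M) (hUopen : ∀ i, IsOpen (U i)) (hUcover : ⋃ i, U i = Set.univ)
    (gt : ∀ i : Fin k, M → EuclideanSpace ℝ (Fin (q i)))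
    (Nt : ∀ i : Fin k, EuclideanSpace ℝ (Fin (q i)))
    (hcont : ∀ i, Continuous (gt i))
    (hemb : ∀ i, Topology.IsEmbedding (fun x : U i => gt i (x : M)))
    (hbdd : ∀ i, Bornology.IsBounded (gt i '' U i))
    (hconst : ∀ i, ∀ x ∉ U i, gt i x = Nt i)
    (hNnotin : ∀ i, Nt i ∉ gt i '' U i)
    (hfrontier : ∀ i, closure (gt i '' U i) \ gt i '' U i ⊆ {Nt i}) :
    Topology.IsEmbedding (fun (x : M) (i : Fin k) => gt i x) := by
  have hmem : ∀ i (x : M), x ∈ U i ↔ gt i x ≠ Nt i := by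
    intro i x
    constructor
    · intro hx h
      exact hNnotin i ⟨x, hx, h⟩
    · intro h
      by_contra hx
      exact h (hconst i x hx)
  have hcoverx : ∀ x : M, ∃ i, x ∈ U i := by
    intro x
    have : x ∈ ⋃ i, U i := hUcover ▸ Set.mem_univ x
    exact Set.mem_iUnion.mp this
  constructor
  · -- inducing
    rw [Topology.isInducing_iff_nhds]
    intro x
    obtain ⟨i, hxU⟩ := hcoverx x
    refine le_antisymm ((continuous_pi hcont).tendsto x).le_comap ?_
    have h1 : Filter.comap (fun (x : M) (i : Fin k) => gt i x)
        (nhds fun i => gt i x) ≤ Filter.comap (gt i) (nhds (gt i x)) := by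
      have : gt i = (fun f : (∀ j : Fin k, EuclideanSpace ℝ (Fin (q j))) => f i) ∘
          (fun (x : M) (j : Fin k) => gt j x) := rfl
      rw [this, ← Filter.comap_comap]
      exact Filter.comap_mono (((continuous_apply i).tendsto _).le_comap)
    refine h1.trans ?_
    -- show comap (gt i) (𝓝 (gt i x)) ≤ 𝓝 x
    intro V hV
    -- val ⁻¹' V is a nbhd of ⟨x, hxU⟩ in U i
    have hVs : (Subtype.val : U i → M) ⁻¹' V ∈ nhds (⟨x, hxU⟩ : U i) :=
      continuous_subtype_val.continuousAt.preimage_mem_nhds hV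
    rw [(hemb i).isInducing.nhds_eq_comap] at hVs
    obtain ⟨W, hW, hWsub⟩ := Filter.mem_comap.mp hVs
    refine Filter.mem_comap.mpr ⟨W ∩ {Nt i}ᶜ, Filter.inter_mem hW
      (isOpen_compl_singleton.mem_nhds ((hmem i x).mp hxU)), ?_⟩
    intro y hy
    have hyU : y ∈ U i := (hmem i y).mpr hy.2
    exact hWsub (Set.mem_preimage.mpr hy.1 : (⟨y, hyU⟩ : U i) ∈ _)
  · -- injective
    intro x y hxy
    obtain ⟨i, hxU⟩ := hcoverx x
    have heq : gt i x = gt i y := congrFun hxy i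
    have hyU : y ∈ U i := (hmem i y).mpr (heq ▸ (hmem i x).mp hxU)
    have := (hemb i).injective (a₁ := ⟨x, hxU⟩) (a₂ := ⟨y, hyU⟩) heq
    exact congrArg Subtype.val this
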